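/- Let F : Ω → U be an L²-independent continuous frame with frame operator S, and let f = ∫_{Ω₁} φ(ω)F(ω) dμ(ω) for φ ∈ L²(Ω,A) and measurable Ω₁ of finite measure. Then ⟨S^{-1}f, f⟩ = ∫_{Ω₁} |φ(ω)*|² dμ(ω). -/
import Mathlib


open MeasureTheory

class HCSM (A : outParam Type*) (U : Type*) [CStarAlgebra A] [PartialOrder A] [StarOrderedRing A]
    [NormedAddCommGroup U] [NormedSpace ℂ U] extends SMul A U where
  inner : U → U → A
  add_left : ∀ f g h : U, inner (f + g) h = inner f h + inner g h
  smul_left : ∀ (a : A) (f g : U), inner (a • f) g = a * inner f g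
  smulC_left : ∀ (c : ℂ) (f g : U), inner (c • f) g = c • inner f g
  star_inner : ∀ f g : U, star (inner f g) = inner g f
  inner_nonneg : ∀ f : U, 0 ≤ inner f f
  inner_definite : ∀ f : U, inner f f = 0 → f = 0
  norm_inner : ∀ f : U, ‖f‖ = Real.sqrt ‖inner f f‖

notation "⟪" f ", " g "⟫" => HCSM.inner f g

variable {A : Type*} [CStarAlgebra A] [PartialOrder A] [StarOrderedRing A]
variable {U : Type*} [NormedAddCommGroup U] [NormedSpace ℂ U] [CompleteSpace U] [HCSM A U]
variable {Ω : Type*} [MeasurableSpace Ω]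

def MemL2 (μ : Measure Ω) (φ : Ω → A) : Prop :=
  AEStronglyMeasurable φ μ ∧ Integrable (fun ω => φ ω * star (φ ω)) μ

def WeaklyMeasurable (μ : Measure Ω) (F : Ω → U) : Prop :=
  ∀ f : U, AEStronglyMeasurable (fun ω => (⟪f, F ω⟫ : A)) μ

def IsBessel (μ : Measure Ω) (F : Ω → U) (b : ℝ) : Prop :=
  WeaklyMeasurable μ F ∧ 0 < b ∧ ∀ f : U,
    Integrable (fun ω => (⟪f, F ω⟫ : A) * ⟪F ω, f⟫) μ ∧
    (∫ ω, (⟪f, F ω⟫ : A) * ⟪F ω, f⟫ ∂μ) ≤ b • (⟪f, f⟫ : A)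

def IsContFrame (μ : Measure Ω) (F : Ω → U) (a b : ℝ) : Prop :=
  WeaklyMeasurable μ F ∧ 0 < a ∧ 0 < b ∧ ∀ f : U,
    Integrable (fun ω => (⟪f, F ω⟫ : A) * ⟪F ω, f⟫) μ ∧
    a • (⟪f, f⟫ : A) ≤ (∫ ω, (⟪f, F ω⟫ : A) * ⟪F ω, f⟫ ∂μ) ∧
    (∫ ω, (⟪f, F ω⟫ : A) * ⟪F ω, f⟫ ∂μ) ≤ b • (⟪f, f⟫ : A)

def MuComplete (μ : Measure Ω) (F : Ω → U) : Prop :=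
  ∀ f : U, (∀ᵐ ω ∂μ, (⟪f, F ω⟫ : A) = 0) → f = 0

def IsRieszBasis (μ : Measure Ω) (F : Ω → U) (a b : ℝ) : Prop :=
  WeaklyMeasurable μ F ∧ MuComplete μ F ∧ 0 < a ∧ 0 < b ∧
  ∀ φ : Ω → A, MemL2 μ φ → ∀ Ω₁ : Set Ω, MeasurableSet Ω₁ → μ Ω₁ < ⊤ →
    a * Real.sqrt ‖∫ ω in Ω₁, φ ω * star (φ ω) ∂μ‖ ≤ ‖∫ ω in Ω₁, φ ω • F ω ∂μ‖ ∧
    ‖∫ ω in Ω₁, φ ω • F ω ∂μ‖ ≤ b * Real.sqrt ‖∫ ω in Ω₁, φ ω * star (φ ω) ∂μ‖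

def L2Independent (μ : Measure Ω) (F : Ω → U) : Prop :=
  ∀ φ : Ω → A, MemL2 μ φ → (∫ ω, φ ω • F ω ∂μ) = 0 → ∀ ω, φ ω = 0

def IsDual (μ : Measure Ω) (F G : Ω → U) : Prop :=
  ∀ f : U, Integrable (fun ω => (⟪f, G ω⟫ : A) • F ω) μ ∧
    (∫ ω, (⟪f, G ω⟫ : A) • F ω ∂μ) = f

def IsRieszType (μ : Measure Ω) (F : Ω → U) : Prop :=
  (∃ G : Ω → U, (∃ b, IsBessel μ G b) ∧ IsDual μ F G) ∧
  ∀ G₁ G₂ : Ω → U, (∃ b, IsBessel μ G₁ b) → IsDual μ F G₁ →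
    (∃ b, IsBessel μ G₂ b) → IsDual μ F G₂ → G₁ =ᵐ[μ] G₂


section AuxHCSM
variable {A : Type*} [CStarAlgebra A] [PartialOrder A] [StarOrderedRing A]
variable {U : Type*} [NormedAddCommGroup U] [NormedSpace ℂ U] [HCSM A U]

lemma hcsm_inner_zero_left (g : U) : (⟪(0 : U), g⟫ : A) = 0 := by
  have h := HCSM.add_left (0 : U) 0 g
  rw [add_zero] at h
  have h2 : (⟪(0 : U), g⟫ : A) + ⟪(0 : U), g⟫ = ⟪(0 : U), g⟫ := h.symm
  rwa [add_eq_left] at h2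

lemma hcsm_inner_neg_left (f g : U) : (⟪-f, g⟫ : A) = -⟪f, g⟫ := by
  have h := HCSM.add_left f (-f) g
  rw [add_neg_cancel, hcsm_inner_zero_left] at h
  exact eq_neg_of_add_eq_zero_left ((add_comm _ _).trans h.symm)

lemma hcsm_inner_sub_left (f g h : U) : (⟪f - g, h⟫ : A) = ⟪f, h⟫ - ⟪g, h⟫ := by
  rw [sub_eq_add_neg, HCSM.add_left, hcsm_inner_neg_left, sub_eq_add_neg]

lemma hcsm_ext {f g : U} (h : ∀ x : U, (⟪f, x⟫ : A) = ⟪g, x⟫) : f = g := by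
  have h0 : (⟪f - g, f - g⟫ : A) = 0 := by
    rw [hcsm_inner_sub_left, h (f - g), sub_self]
  exact sub_eq_zero.mp (HCSM.inner_definite _ h0)

lemma hcsm_zero_smul (x : U) : (0 : A) • x = (0 : U) := by
  apply hcsm_ext
  intro g
  rw [HCSM.smul_left, zero_mul, hcsm_inner_zero_left]

lemma hcsm_sub_smul (a b : A) (x : U) : (a - b) • x = a • x - b • x := by
  apply hcsm_ext
  intro g
  rw [HCSM.smul_left, hcsm_inner_sub_left, HCSM.smul_left, HCSM.smul_left, sub_mul]

end AuxHCSM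

theorem canonical_dual_coefficients
    {A : Type*} [CStarAlgebra A] [PartialOrder A] [StarOrderedRing A]
    {U : Type*} [NormedAddCommGroup U] [NormedSpace ℂ U] [CompleteSpace U] [HCSM A U]
    {Ω : Type*} [MeasurableSpace Ω] (μ : Measure Ω)
    (F : Ω → U) (a b : ℝ) (hF : IsContFrame μ F a b) (hInd : L2Independent μ F)
    (S Sinv : U → U)
    (hS : ∀ f g : U, (⟪S f, g⟫ : A) = ∫ ω, (⟪f, F ω⟫ : A) * ⟪F ω, g⟫ ∂μ)
    (hSinv : ∀ f : U, Sinv (S f) = f ∧ S (Sinv f) = f)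
    (hdual : ∀ g : U, (∫ ω, (⟪g, Sinv (F ω)⟫ : A) • F ω ∂μ) = g)
    (φ : Ω → A) (hφ : MemL2 μ φ)
    (Ω₁ : Set Ω) (hΩ₁ : MeasurableSet Ω₁) (hfin : μ Ω₁ < ⊤)
    (f : U) (hf : f = ∫ ω in Ω₁, φ ω • F ω ∂μ) :
    (⟪Sinv f, f⟫ : A) = ∫ ω in Ω₁, φ ω * star (φ ω) ∂μ := by
  -- helper: star commutes with integrals
  have istar : ∀ (h : Ω → A), star (∫ ω, h ω ∂μ) = ∫ ω, star (h ω) ∂μ := by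
    intro h
    have := (starL' ℝ (A := A)).integral_comp_comm (μ := μ) h
    simpa using this.symm
  -- S is self-adjoint
  have Ssa : ∀ u y : U, (⟪S u, y⟫ : A) = ⟪u, S y⟫ := by
    intro u y
    calc (⟪S u, y⟫ : A) = ∫ ω, (⟪u, F ω⟫ : A) * ⟪F ω, y⟫ ∂μ := hS u y
      _ = ∫ ω, star ((⟪y, F ω⟫ : A) * ⟪F ω, u⟫) ∂μ := by
          congr 1; funext ω
          rw [star_mul, HCSM.star_inner, HCSM.star_inner]
      _ = star (∫ ω, (⟪y, F ω⟫ : A) * ⟪F ω, u⟫ ∂μ) := (istar _).symm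
      _ = star (⟪S y, u⟫ : A) := by rw [hS]
      _ = ⟪u, S y⟫ := HCSM.star_inner _ _
  have key : ∀ x : U, (⟪f, Sinv x⟫ : A) = ⟪Sinv f, x⟫ := by
    intro x
    calc (⟪f, Sinv x⟫ : A) = ⟪S (Sinv f), Sinv x⟫ := by rw [(hSinv f).2]
      _ = ⟪Sinv f, S (Sinv x)⟫ := Ssa _ _
      _ = ⟪Sinv f, x⟫ := by rw [(hSinv x).2]
  set g : U := Sinv f with hg
  set β : Ω → A := fun ω => ⟪g, F ω⟫ with hβdef
  set ψ : Ω → A := fun ω => Ω₁.indicator φ ω - β ω with hψdef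
  set u : Ω → U := fun ω => Ω₁.indicator φ ω • F ω with hudef
  set v : Ω → U := fun ω => β ω • F ω with hvdef
  have hu_eq : u = Ω₁.indicator (fun ω => φ ω • F ω) := by
    funext ω
    by_cases hω : ω ∈ Ω₁
    · simp [hudef, Set.indicator_of_mem hω]
    · simp [hudef, Set.indicator_of_notMem hω, hcsm_zero_smul]
  have hdual' : (∫ ω, v ω ∂μ) = f := by
    have h := hdual f
    simp only [key] at h
    exact h
  -- if f = 0 then β ≡ 0
  have hS0 : S (0 : U) = 0 := by
    apply HCSM.inner_definite
    rw [hS]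
    have : (fun ω => (⟪(0 : U), F ω⟫ : A) * ⟪F ω, S 0⟫) = fun _ => (0 : A) := by
      funext ω; rw [hcsm_inner_zero_left, zero_mul]
    rw [this, integral_zero]
  have hf0β : f = 0 → β = fun _ => (0 : A) := by
    intro h0
    have h5 : Sinv (0 : U) = 0 := by
      nth_rewrite 1 [← hS0]
      exact (hSinv 0).1
    have hg0 : g = 0 := by rw [hg, h0, h5]
    funext ω
    rw [hβdef]
    simp only [hg0]
    exact hcsm_inner_zero_left _
  -- v is integrable
  have hv : Integrable v μ := by
    by_contra hcon
    have h0 : f = 0 := by rw [← hdual', integral_undef hcon]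
    have hβ0 := hf0β h0
    apply hcon
    have : v = fun _ => (0 : U) := by
      funext ω
      rw [hvdef]
      simp only [hβ0]
      exact hcsm_zero_smul _
    rw [this]
    exact integrable_zero _ _ _
  -- ψ is in L²
  have hβmeas : AEStronglyMeasurable β μ := hF.1 g
  have hψmeas : AEStronglyMeasurable ψ μ := (hφ.1.indicator hΩ₁).sub hβmeas
  have hαα : Integrable (fun ω => Ω₁.indicator φ ω * star (Ω₁.indicator φ ω)) μ := by
    have heq : (fun ω => Ω₁.indicator φ ω * star (Ω₁.indicator φ ω))
        = Ω₁.indicator (fun ω => φ ω * star (φ ω)) := by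
      funext ω
      by_cases hω : ω ∈ Ω₁
      · simp [Set.indicator_of_mem hω]
      · simp [Set.indicator_of_notMem hω]
    rw [heq]
    exact hφ.2.indicator hΩ₁
  have hββ : Integrable (fun ω => β ω * star (β ω)) μ := by
    have heq : (fun ω => β ω * star (β ω)) = fun ω => (⟪g, F ω⟫ : A) * ⟪F ω, g⟫ := by
      funext ω; rw [hβdef]; simp only; rw [HCSM.star_inner]
    rw [heq]
    exact (hF.2.2.2 g).1
  have hψL2 : MemL2 μ ψ := by
    refine ⟨hψmeas, ?_⟩
    apply Integrable.mono' ((hαα.norm.const_mul 2).add (hββ.norm.const_mul 2))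
      (hψmeas.mul (continuous_star.comp_aestronglyMeasurable hψmeas))
    filter_upwards with ω
    show ‖ψ ω * star (ψ ω)‖ ≤ 2 * ‖Ω₁.indicator φ ω * star (Ω₁.indicator φ ω)‖
      + 2 * ‖β ω * star (β ω)‖
    have h1 : ‖ψ ω * star (ψ ω)‖ = ‖ψ ω‖ * ‖ψ ω‖ := CStarRing.norm_self_mul_star
    have h2 : ‖Ω₁.indicator φ ω * star (Ω₁.indicator φ ω)‖
        = ‖Ω₁.indicator φ ω‖ * ‖Ω₁.indicator φ ω‖ := CStarRing.norm_self_mul_star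
    have h3 : ‖β ω * star (β ω)‖ = ‖β ω‖ * ‖β ω‖ := CStarRing.norm_self_mul_star
    have h4 : ‖ψ ω‖ ≤ ‖Ω₁.indicator φ ω‖ + ‖β ω‖ := norm_sub_le _ _
    rw [h1, h2, h3]
    nlinarith [norm_nonneg (ψ ω), norm_nonneg (Ω₁.indicator φ ω), norm_nonneg (β ω),
      sq_nonneg (‖Ω₁.indicator φ ω‖ - ‖β ω‖)]
  -- pointwise: ψ ω • F ω = u ω - v ω
  have hptw : ∀ ω, ψ ω • F ω = u ω - v ω := by
    intro ω
    rw [hψdef]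
    exact hcsm_sub_smul _ _ _
  -- the integral of ψ • F vanishes
  have hψF : (∫ ω, ψ ω • F ω ∂μ) = 0 := by
    by_cases hu : Integrable u μ
    · have huint : (∫ ω, u ω ∂μ) = f := by
        rw [hu_eq, integral_indicator hΩ₁, ← hf]
      simp_rw [hptw]
      rw [integral_sub hu hv, huint, hdual', sub_self]
    · have hnint : ¬ IntegrableOn (fun ω => φ ω • F ω) Ω₁ μ := by
        intro hcon
        exact hu (hu_eq ▸ hcon.integrable_indicator hΩ₁)
      have h0 : f = 0 := by rw [hf]; exact integral_undef hnint
      have hβ0 := hf0β h0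
      have hveq : v = fun _ => (0 : U) := by
        funext ω
        rw [hvdef]
        simp only [hβ0]
        exact hcsm_zero_smul _
      have : (fun ω => ψ ω • F ω) = u := by
        funext ω
        rw [hptw ω, hveq]
        simp
      rw [this]
      exact integral_undef hu
  -- conclude ψ = 0 everywhere
  have hψ0 : ∀ ω, ψ ω = 0 := hInd ψ hψL2 hψF
  have hβind : ∀ ω, (⟪g, F ω⟫ : A) = Ω₁.indicator φ ω := by
    intro ω
    have := hψ0 ω
    rw [hψdef] at this
    exact (sub_eq_zero.mp this).symm
  -- final computation
  have hfSg : S g = f := (hSinv f).2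
  calc (⟪Sinv f, f⟫ : A) = ⟪g, S g⟫ := by rw [hfSg]
    _ = ⟪S g, g⟫ := (Ssa g g).symm
    _ = ∫ ω, (⟪g, F ω⟫ : A) * ⟪F ω, g⟫ ∂μ := hS g g
    _ = ∫ ω, Ω₁.indicator (fun ω => φ ω * star (φ ω)) ω ∂μ := by
        congr 1; funext ω
        rw [← HCSM.star_inner g (F ω), hβind ω]
        by_cases hω : ω ∈ Ω₁
        · simp [Set.indicator_of_mem hω]
        · simp [Set.indicator_of_notMem hω]
    _ = ∫ ω in Ω₁, φ ω * star (φ ω) ∂μ := integral_indicator hΩ₁
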